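/- Let α ∈ (0,1) and let λ be a nonzero complex number with arg(λ) ∈ (-πα, πα). Then ∫₀^∞ v^{α-1} / (v^{2α} - 2λ v^α cos(απ) + λ²) dv = π(1-α) / (α λ sin(απ)). -/

import Mathlib

open Real Set Filter MeasureTheory
open Topology


lemma aux_re_lt {μ : ℂ} (h : ¬ (0 ≤ μ.re ∧ μ.im = 0)) : μ.re < ‖μ‖ := by
  rcases lt_or_ge μ.re 0 with h1 | h1
  · exact h1.trans_le (norm_nonneg μ)
  · have him : μ.im ≠ 0 := fun h2 => h ⟨h1, h2⟩
    have h2 : (‖μ‖)^2 = μ.re^2 + μ.im^2 := by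
      rw [Complex.sq_norm, Complex.normSq_apply]; ring
    nlinarith [norm_nonneg μ, sq_pos_of_ne_zero him]

lemma aux_slit {μ : ℂ} (h : μ.re < ‖μ‖) {t : ℝ} (ht : 0 ≤ t) :
    (t:ℂ) - μ ∈ Complex.slitPlane := by
  rcases eq_or_ne μ.im 0 with him | him
  · left
    have habs : ‖μ‖ = |μ.re| := by
      rw [Complex.norm_def, Complex.normSq_apply, him]
      rw [← sq]
      simp [Real.sqrt_sq_eq_abs]
    have : μ.re < 0 := by
      rcases abs_cases μ.re with ⟨h1, _⟩ | ⟨h1, h2⟩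
      · rw [habs, h1] at h; linarith
      · linarith
    simp only [Complex.sub_re, Complex.ofReal_re]
    linarith
  · right
    simpa using him

lemma aux_lb {μ : ℂ} (h : μ.re < ‖μ‖) :
    ∃ c > 0, ∀ t : ℝ, 0 ≤ t → c * (t + ‖μ‖) ≤ ‖((t:ℂ) - μ)‖ := by
  have hμ0 : μ ≠ 0 := by rintro rfl; simp at h
  set L := ‖μ‖ with hLdef
  have hL0 : 0 < L := norm_pos_iff.mpr hμ0
  have hre : -L ≤ μ.re := by
    have := Complex.abs_re_le_norm μ
    rcases abs_cases μ.re with ⟨h1, _⟩ | ⟨h1, _⟩ <;> linarith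
  set k := (L - μ.re) / (2 * L) with hk
  have hk0 : 0 < k := by
    apply div_pos (by linarith) (by linarith)
  refine ⟨Real.sqrt k, Real.sqrt_pos.2 hk0, fun t ht => ?_⟩
  have hsq : (‖((t:ℂ) - μ)‖)^2 = (t - μ.re)^2 + μ.im^2 := by
    rw [Complex.sq_norm, Complex.normSq_apply]
    simp [Complex.sub_re, Complex.sub_im]
    ring
  have him2 : μ.im^2 = L^2 - μ.re^2 := by
    have : L^2 = μ.re^2 + μ.im^2 := by
      rw [hLdef, Complex.sq_norm, Complex.normSq_apply]; ring
    linarith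
  have key : (Real.sqrt k * (t + L))^2 ≤ (‖((t:ℂ) - μ)‖)^2 := by
    rw [mul_pow, Real.sq_sqrt hk0.le, hsq, him2, hk, div_mul_eq_mul_div,
      div_le_iff₀ (by linarith : (0:ℝ) < 2 * L)]
    nlinarith [mul_nonneg (by linarith : (0:ℝ) ≤ L + μ.re) (sq_nonneg (t - L))]
  have h1 : 0 ≤ Real.sqrt k * (t + L) := by positivity
  nlinarith [norm_nonneg ((t:ℂ) - μ)]

set_option maxHeartbeats 1000000 in
theorem stmt_9 (α : ℝ) (hα : α ∈ Set.Ioo (0 : ℝ) 1)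
    (lam : ℂ) (hlam : lam ≠ 0) (harg : lam.arg ∈ Set.Ioo (-(π * α)) (π * α)) :
    (∫ v in Set.Ioi (0 : ℝ),
        ((v ^ (α - 1) : ℝ) : ℂ) /
          (((v ^ (2 * α) : ℝ) : ℂ) - 2 * lam * ((v ^ α : ℝ) : ℂ) * (Real.cos (α * π) : ℝ) +
            lam ^ 2)) =
      ((π * (1 - α) : ℝ) : ℂ) / ((α : ℂ) * lam * (Real.sin (α * π) : ℝ)) := by
  obtain ⟨hα0, hα1⟩ := hα
  obtain ⟨harg1, harg2⟩ := harg
  set θ := π * α with hθdef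
  have hπ := Real.pi_pos
  have hθ0 : 0 < θ := by positivity
  have hθπ : θ < π := by nlinarith
  set μ₁ := lam * Complex.exp (θ * Complex.I) with hμ₁def
  set μ₂ := lam * Complex.exp (-θ * Complex.I) with hμ₂def
  have hargexp : ∀ ψ : ℝ, -π < ψ → ψ ≤ π → (Complex.exp ((ψ:ℂ) * Complex.I)).arg = ψ := by
    intro ψ h1 h2
    rw [Complex.exp_mul_I]
    exact Complex.arg_cos_add_sin_mul_I ⟨h1, h2⟩
  -- μ₁, μ₂ are not nonneg reals
  have key1 : ∀ s : ℝ, -π < s → s < π → lam.arg ≠ -s →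
      ¬ (0 ≤ (lam * Complex.exp ((s:ℂ) * Complex.I)).re ∧
         (lam * Complex.exp ((s:ℂ) * Complex.I)).im = 0) := by
    intro s h1 h2 h3 ⟨hre, him⟩
    set μ := lam * Complex.exp ((s:ℂ) * Complex.I) with hμ
    have hμ0 : μ ≠ 0 := mul_ne_zero hlam (Complex.exp_ne_zero _)
    have hrepos : 0 < μ.re := by
      rcases hre.lt_or_eq with h | h
      · exact h
      · exfalso; apply hμ0; apply Complex.ext <;> simp [← h, him]
    have hμr : μ = ((μ.re : ℝ) : ℂ) := by apply Complex.ext <;> simp [him]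
    have hlameq : lam = (μ.re : ℂ) * Complex.exp ((-s : ℂ) * Complex.I) := by
      rw [← hμr, hμ, mul_assoc, ← Complex.exp_add]
      norm_num
    apply h3
    rw [hlameq, Complex.arg_real_mul _ hrepos,
      show ((-s : ℂ)) = (((-s : ℝ)):ℂ) by push_cast; ring,
      hargexp (-s) (by linarith) (by linarith)]
  have hre1 : μ₁.re < ‖μ₁‖ := by
    apply aux_re_lt
    have h := key1 θ (by linarith) hθπ (by intro h; rw [h] at harg1; exact lt_irrefl _ harg1)
    exact h
  have hre2 : μ₂.re < ‖μ₂‖ := by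
    apply aux_re_lt
    have h := key1 (-θ) (by linarith) (by linarith)
      (by intro hh; rw [hh] at harg2; simp at harg2)
    rw [show (((-θ : ℝ)):ℂ) = -(θ:ℂ) by push_cast; ring] at h
    exact h
  have habs1 : ‖μ₁‖ = ‖lam‖ := by
    rw [hμ₁def, norm_mul, Complex.norm_exp]
    simp
  have habs2 : ‖μ₂‖ = ‖lam‖ := by
    rw [hμ₂def, norm_mul, Complex.norm_exp]
    simp
  -- algebraic identities
  have hsum : μ₁ + μ₂ = 2 * lam * ((Real.cos θ : ℝ) : ℂ) := by
    rw [hμ₁def, hμ₂def, Complex.exp_mul_I, Complex.exp_mul_I, Complex.cos_neg, Complex.sin_neg,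
      Complex.ofReal_cos]
    ring
  have hprod : μ₁ * μ₂ = lam ^ 2 := by
    rw [hμ₁def, hμ₂def, Complex.exp_mul_I, Complex.exp_mul_I, Complex.cos_neg, Complex.sin_neg]
    linear_combination lam ^ 2 * Complex.sin_sq_add_cos_sq (θ:ℂ) - lam ^ 2 * Complex.sin (θ:ℂ) ^ 2 * Complex.I_sq
  have hdiff : μ₁ - μ₂ = 2 * Complex.I * lam * ((Real.sin θ : ℝ) : ℂ) := by
    rw [hμ₁def, hμ₂def, Complex.exp_mul_I, Complex.exp_mul_I, Complex.cos_neg, Complex.sin_neg,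
      Complex.ofReal_sin]
    ring
  obtain ⟨c₁, hc₁, hb₁⟩ := aux_lb hre1
  obtain ⟨c₂, hc₂, hb₂⟩ := aux_lb hre2
  rw [habs1] at hb₁
  rw [habs2] at hb₂
  set L := ‖lam‖ with hLdef
  have hL0 : 0 < L := norm_pos_iff.mpr hlam
  have hne1 : ∀ t : ℝ, 0 ≤ t → ((t:ℂ) - μ₁) ≠ 0 := by
    intro t ht h0
    have h := hb₁ t ht
    rw [h0, norm_zero] at h
    nlinarith
  have hne2 : ∀ t : ℝ, 0 ≤ t → ((t:ℂ) - μ₂) ≠ 0 := by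
    intro t ht h0
    have h := hb₂ t ht
    rw [h0, norm_zero] at h
    nlinarith
  have hDeq : ∀ v : ℝ, 0 < v →
      (((v ^ (2*α) : ℝ) : ℂ) - 2 * lam * ((v^α : ℝ):ℂ) * ((Real.cos (α*π) : ℝ):ℂ) + lam^2)
      = (((v^α : ℝ):ℂ) - μ₁) * (((v^α : ℝ):ℂ) - μ₂) := by
    intro v hv
    have h2 : v ^ (2*α) = (v ^ α)^2 := by
      rw [two_mul, Real.rpow_add hv]
      ring
    rw [h2, show α * π = θ by rw [hθdef]; ring]
    have hsum' := hsum
    rw [Complex.ofReal_cos] at hsum'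
    push_cast
    linear_combination ((v^α : ℝ):ℂ) * hsum' - hprod
  have hsin0 : Real.sin θ ≠ 0 := (Real.sin_pos_of_pos_of_lt_pi hθ0 hθπ).ne'
  set K : ℂ := 2 * Complex.I * (α:ℂ) * lam * ((Real.sin θ : ℝ):ℂ) with hKdef
  have hK0 : K ≠ 0 := by
    rw [hKdef]
    apply mul_ne_zero
    apply mul_ne_zero
    apply mul_ne_zero
    apply mul_ne_zero
    · norm_num
    · exact Complex.I_ne_zero
    · exact_mod_cast hα0.ne'
    · exact hlam
    · exact Complex.ofReal_ne_zero.mpr hsin0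
  set G : ℝ → ℂ := fun v =>
    K⁻¹ * (Complex.log (((v^α : ℝ):ℂ) - μ₁) - Complex.log (((v^α : ℝ):ℂ) - μ₂)) with hGdef
  have hderiv : ∀ v ∈ Ioi (0:ℝ), HasDerivAt G
      (((v ^ (α - 1) : ℝ) : ℂ) /
        (((v ^ (2*α) : ℝ) : ℂ) - 2*lam*((v^α:ℝ):ℂ)*((Real.cos (α*π):ℝ):ℂ) + lam^2)) v := by
    intro v hv
    have hv0 : (0:ℝ) < v := hv
    have ht0 : (0:ℝ) ≤ v ^ α := Real.rpow_nonneg hv0.le α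
    have hr : HasDerivAt (fun w : ℝ => w ^ α) (α * v^(α-1)) v :=
      Real.hasDerivAt_rpow_const (Or.inl hv0.ne')
    have h1 : HasDerivAt (fun w : ℝ => ((w^α : ℝ) : ℂ)) (((α * v^(α-1) : ℝ)) : ℂ) v :=
      hr.ofReal_comp
    have h2 := (h1.sub_const μ₁).clog_real (aux_slit hre1 ht0)
    have h3 := (h1.sub_const μ₂).clog_real (aux_slit hre2 ht0)
    have h4 := ((h2.sub h3).const_mul K⁻¹)
    refine HasDerivAt.congr_deriv h4 ?_
    symm
    rw [hDeq v hv0]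
    have e1 := hne1 _ ht0
    have e2 := hne2 _ ht0
    have hα0' : (α:ℂ) ≠ 0 := by exact_mod_cast hα0.ne'
    have hcast : ((α * v ^ (α-1) : ℝ):ℂ) = (α:ℂ) * ((v ^ (α-1) : ℝ):ℂ) := by push_cast; ring
    rw [hcast, div_sub_div _ _ e1 e2,
      show ((α:ℂ) * ((v ^ (α-1) : ℝ):ℂ)) * (((v^α : ℝ):ℂ) - μ₂) -
          (((v^α : ℝ):ℂ) - μ₁) * ((α:ℂ) * ((v ^ (α-1) : ℝ):ℂ))
        = (α:ℂ) * ((v ^ (α-1) : ℝ):ℂ) * (μ₁ - μ₂) by ring,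
      hdiff, ← mul_div_assoc,
      show K⁻¹ * ((α:ℂ) * ((v ^ (α-1) : ℝ):ℂ) * (2 * Complex.I * lam * ((Real.sin θ : ℝ):ℂ)))
        = ((v ^ (α-1) : ℝ):ℂ) by
        rw [show (α:ℂ) * ((v ^ (α-1) : ℝ):ℂ) * (2 * Complex.I * lam * ((Real.sin θ : ℝ):ℂ))
            = ((v ^ (α-1) : ℝ):ℂ) * K by rw [hKdef]; ring,
          mul_comm (((v ^ (α-1) : ℝ):ℂ)) K, ← mul_assoc, inv_mul_cancel₀ hK0, one_mul]]
  -- continuity at 0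
  have hz : (((0:ℝ) ^ α : ℝ):ℂ) = 0 := by rw [Real.zero_rpow hα0.ne']; simp
  have hslit0₁ : (((0:ℝ) ^ α : ℝ):ℂ) - μ₁ ∈ Complex.slitPlane := aux_slit hre1 (Real.rpow_nonneg le_rfl α)
  have hslit0₂ : (((0:ℝ) ^ α : ℝ):ℂ) - μ₂ ∈ Complex.slitPlane := aux_slit hre2 (Real.rpow_nonneg le_rfl α)
  have hc0 : ContinuousAt (fun v : ℝ => ((v ^ α : ℝ) : ℂ)) 0 :=
    Complex.continuous_ofReal.continuousAt.comp (Real.continuousAt_rpow_const 0 α (Or.inr hα0.le))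
  have hcont : ContinuousWithinAt G (Ici (0:ℝ)) 0 := by
    apply ContinuousAt.continuousWithinAt
    have hl1 : ContinuousAt (fun v : ℝ => Complex.log (((v^α:ℝ):ℂ) - μ₁)) 0 :=
      (hc0.sub continuousAt_const).clog hslit0₁
    have hl2 : ContinuousAt (fun v : ℝ => Complex.log (((v^α:ℝ):ℂ) - μ₂)) 0 :=
      (hc0.sub continuousAt_const).clog hslit0₂
    exact (hl1.sub hl2).const_mul _
  -- value at 0
  have hexppi : Complex.exp ((π:ℂ) * Complex.I) = -1 := Complex.exp_pi_mul_I
  have hlog1 : Complex.log (-μ₁) = Complex.log lam + ((θ:ℂ) - (π:ℂ)) * Complex.I := by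
    have he : Complex.exp (Complex.log lam + ((θ:ℂ) - (π:ℂ)) * Complex.I) = -μ₁ := by
      rw [Complex.exp_add, Complex.exp_log hlam, sub_mul, Complex.exp_sub, hexppi, hμ₁def]
      field_simp
    rw [← he, Complex.log_exp]
    · simp only [Complex.add_im, Complex.log_im, Complex.mul_im, Complex.sub_re,
        Complex.ofReal_re, Complex.I_im, Complex.sub_im, Complex.ofReal_im, Complex.I_re]
      ring_nf
      linarith [harg1]
    · simp only [Complex.add_im, Complex.log_im, Complex.mul_im, Complex.sub_re,
        Complex.ofReal_re, Complex.I_im, Complex.sub_im, Complex.ofReal_im, Complex.I_re]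
      ring_nf
      linarith [harg2]
  have hlog2 : Complex.log (-μ₂) = Complex.log lam + ((π:ℂ) - (θ:ℂ)) * Complex.I := by
    have he : Complex.exp (Complex.log lam + ((π:ℂ) - (θ:ℂ)) * Complex.I) = -μ₂ := by
      rw [Complex.exp_add, Complex.exp_log hlam, sub_mul, Complex.exp_sub, hexppi, hμ₂def]
      field_simp
      rw [← Complex.exp_add]
      simp
    rw [← he, Complex.log_exp]
    · simp only [Complex.add_im, Complex.log_im, Complex.mul_im, Complex.sub_re,
        Complex.ofReal_re, Complex.I_im, Complex.sub_im, Complex.ofReal_im, Complex.I_re]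
      ring_nf
      linarith [harg2]
    · simp only [Complex.add_im, Complex.log_im, Complex.mul_im, Complex.sub_re,
        Complex.ofReal_re, Complex.I_im, Complex.sub_im, Complex.ofReal_im, Complex.I_re]
      ring_nf
      linarith [harg1]
  have hG0 : G 0 = K⁻¹ * (((2*θ:ℝ):ℂ) - 2*(π:ℂ)) * Complex.I := by
    rw [hGdef]
    simp only [hz, zero_sub]
    rw [hlog1, hlog2]
    push_cast
    ring
  -- limit at infinity
  have htop : Tendsto G atTop (𝓝 0) := by
    have hinner : Tendsto (fun t : ℝ => Complex.log (1 - μ₁ * ((t:ℂ))⁻¹) -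
        Complex.log (1 - μ₂ * ((t:ℂ))⁻¹)) atTop (𝓝 0) := by
      have hinv : Tendsto (fun t : ℝ => ((t:ℂ))⁻¹) atTop (𝓝 0) := by
        have h1 : Tendsto (fun t : ℝ => ((t⁻¹ : ℝ):ℂ)) atTop (𝓝 ((0:ℝ):ℂ)) :=
          (Complex.continuous_ofReal.tendsto 0).comp tendsto_inv_atTop_zero
        simpa using h1
      have hone : (1:ℂ) ∈ Complex.slitPlane := by
        left; norm_num
      have hlog_cont : ContinuousAt Complex.log 1 := continuousAt_clog hone
      have h1 : Tendsto (fun t : ℝ => 1 - μ₁ * ((t:ℂ))⁻¹) atTop (𝓝 1) := by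
        have := (hinv.const_mul μ₁).const_sub 1
        simpa using this
      have h2 : Tendsto (fun t : ℝ => 1 - μ₂ * ((t:ℂ))⁻¹) atTop (𝓝 1) := by
        have := (hinv.const_mul μ₂).const_sub 1
        simpa using this
      have := ((hlog_cont.tendsto.comp h1).sub (hlog_cont.tendsto.comp h2))
      simpa [Complex.log_one] using this
    have hrtop : Tendsto (fun v : ℝ => v ^ α) atTop atTop := tendsto_rpow_atTop hα0
    have hcomp := (hinner.comp hrtop).const_mul K⁻¹
    rw [mul_zero] at hcomp
    apply hcomp.congr'
    filter_upwards [eventually_gt_atTop (0:ℝ)] with v hv0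
    have ht0 : (0:ℝ) < v ^ α := Real.rpow_pos_of_pos hv0 α
    have htne : ((v^α : ℝ):ℂ) ≠ 0 := by exact_mod_cast ht0.ne'
    have hsplit : ∀ μ : ℂ, ((v^α : ℝ):ℂ) - μ ≠ 0 →
        Complex.log (((v^α : ℝ):ℂ) - μ) = Real.log (v^α) + Complex.log (1 - μ * (((v^α : ℝ):ℂ))⁻¹) := by
      intro μ hμ
      have hfac : ((v^α : ℝ):ℂ) - μ = ((v^α : ℝ):ℂ) * (1 - μ * (((v^α : ℝ):ℂ))⁻¹) := by
        field_simp
      have hne : (1 - μ * (((v^α : ℝ):ℂ))⁻¹) ≠ 0 := by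
        intro h0
        rw [h0, mul_zero] at hfac
        exact hμ hfac
      rw [hfac, Complex.log_ofReal_mul ht0 hne]
    simp only [Function.comp]
    rw [hGdef]
    simp only
    rw [hsplit μ₁ (hne1 _ ht0.le), hsplit μ₂ (hne2 _ ht0.le)]
    ring
  -- integrability
  have habsnum : ∀ v : ℝ, 0 < v → ‖(((v ^ (α - 1) : ℝ)):ℂ) /
      (((v ^ (2*α) : ℝ):ℂ) - 2*lam*((v^α:ℝ):ℂ)*((Real.cos (α*π):ℝ):ℂ) + lam^2)‖
      = v^(α-1) / (‖(((v^α:ℝ):ℂ) - μ₁)‖ * ‖(((v^α:ℝ):ℂ) - μ₂)‖) := by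
    intro v hv
    rw [hDeq v hv, norm_div, norm_mul,
      Complex.norm_real, Real.norm_eq_abs, abs_of_nonneg (Real.rpow_nonneg hv.le _)]
  have hfc : ContinuousOn (fun v : ℝ => (((v ^ (α - 1) : ℝ)):ℂ) /
      (((v ^ (2*α) : ℝ):ℂ) - 2*lam*((v^α:ℝ):ℂ)*((Real.cos (α*π):ℝ):ℂ) + lam^2)) (Ioi (0:ℝ)) := by
    intro v hv
    have hv0 : (0:ℝ) < v := hv
    apply ContinuousAt.continuousWithinAt
    have hnum : ContinuousAt (fun v : ℝ => ((v ^ (α-1) : ℝ):ℂ)) v :=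
      Complex.continuous_ofReal.continuousAt.comp (Real.continuousAt_rpow_const v _ (Or.inl hv0.ne'))
    have hd1 : ContinuousAt (fun v : ℝ => ((v ^ (2*α) : ℝ):ℂ)) v :=
      Complex.continuous_ofReal.continuousAt.comp (Real.continuousAt_rpow_const v _ (Or.inl hv0.ne'))
    have hd2 : ContinuousAt (fun v : ℝ => ((v ^ α : ℝ):ℂ)) v :=
      Complex.continuous_ofReal.continuousAt.comp (Real.continuousAt_rpow_const v _ (Or.inl hv0.ne'))
    have hden : ContinuousAt (fun v : ℝ =>
        ((v ^ (2*α):ℝ):ℂ) - 2*lam*((v^α:ℝ):ℂ)*((Real.cos (α*π):ℝ):ℂ) + lam^2) v :=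
      (hd1.sub ((continuousAt_const.mul hd2).mul continuousAt_const)).add continuousAt_const
    have hdenne : (((v ^ (2*α):ℝ):ℂ) - 2*lam*((v^α:ℝ):ℂ)*((Real.cos (α*π):ℝ):ℂ) + lam^2) ≠ 0 := by
      rw [hDeq v hv0]
      exact mul_ne_zero (hne1 _ (Real.rpow_nonneg hv0.le α)) (hne2 _ (Real.rpow_nonneg hv0.le α))
    exact hnum.div hden hdenne
  have hintA : IntegrableOn (fun v : ℝ => (((v ^ (α - 1) : ℝ)):ℂ) /
      (((v ^ (2*α) : ℝ):ℂ) - 2*lam*((v^α:ℝ):ℂ)*((Real.cos (α*π):ℝ):ℂ) + lam^2)) (Ioc (0:ℝ) 1) := by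
    apply Integrable.mono' (g := fun v => v ^ (α-1) / (c₁ * L * (c₂ * L)))
    · exact (((intervalIntegral.integrableOn_Ioo_rpow_iff one_pos).2 (by linarith)).congr_set_ae
        Ioo_ae_eq_Ioc.symm).div_const _
    · exact (hfc.mono Ioc_subset_Ioi_self).aestronglyMeasurable measurableSet_Ioc
    · filter_upwards [ae_restrict_mem measurableSet_Ioc] with v hv
      obtain ⟨hv0, hv1⟩ := hv
      rw [habsnum v hv0]
      have ht0 : (0:ℝ) ≤ v ^ α := Real.rpow_nonneg hv0.le α
      have h1 := hb₁ (v^α) ht0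
      have h2 := hb₂ (v^α) ht0
      have hAB : c₁ * L * (c₂ * L) ≤
          ‖(((v^α:ℝ):ℂ) - μ₁)‖ * ‖(((v^α:ℝ):ℂ) - μ₂)‖ := by
        calc c₁ * L * (c₂ * L) ≤ (c₁ * (v^α + L)) * (c₂ * (v^α + L)) := by nlinarith [mul_pos hc₁ hc₂, mul_pos (mul_pos hc₁ hc₂) hL0, mul_nonneg (mul_pos hc₁ hc₂).le ht0, mul_nonneg (mul_nonneg (mul_pos hc₁ hc₂).le ht0) (by linarith : (0:ℝ) ≤ v^α + 2*L)]
        _ ≤ _ := mul_le_mul h1 h2 (by positivity) (norm_nonneg _)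
      exact div_le_div_of_nonneg_left (Real.rpow_nonneg hv0.le _) (by positivity) hAB
  have hintB : IntegrableOn (fun v : ℝ => (((v ^ (α - 1) : ℝ)):ℂ) /
      (((v ^ (2*α) : ℝ):ℂ) - 2*lam*((v^α:ℝ):ℂ)*((Real.cos (α*π):ℝ):ℂ) + lam^2)) (Ioi (1:ℝ)) := by
    apply Integrable.mono' (g := fun v => v ^ (-α-1) / (c₁ * c₂))
    · exact (integrableOn_Ioi_rpow_of_lt (by linarith) one_pos).div_const _
    · exact (hfc.mono (Ioi_subset_Ioi zero_le_one)).aestronglyMeasurable measurableSet_Ioi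
    · filter_upwards [ae_restrict_mem measurableSet_Ioi] with v hv
      have hv0 : (0:ℝ) < v := lt_trans one_pos hv
      rw [habsnum v hv0]
      have ht0 : (0:ℝ) ≤ v ^ α := Real.rpow_nonneg hv0.le α
      have h1 := hb₁ (v^α) ht0
      have h2 := hb₂ (v^α) ht0
      have hA1 : c₁ * v^α ≤ ‖(((v^α:ℝ):ℂ) - μ₁)‖ := le_trans (by nlinarith) h1
      have hA2 : c₂ * v^α ≤ ‖(((v^α:ℝ):ℂ) - μ₂)‖ := le_trans (by nlinarith) h2
      have h2a : v^(α-1) = v^(-α-1) * v^α * v^α := by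
        rw [← Real.rpow_add hv0, ← Real.rpow_add hv0]
        congr 1
        ring
      have htpos : (0:ℝ) < v^α := Real.rpow_pos_of_pos hv0 α
      rw [h2a, div_le_div_iff₀ (mul_pos (lt_of_lt_of_le (by positivity) hA1)
        (lt_of_lt_of_le (by positivity) hA2)) (by positivity)]
      have hmul : (c₁ * v^α) * (c₂ * v^α) ≤
          ‖(((v^α:ℝ):ℂ) - μ₁)‖ * ‖(((v^α:ℝ):ℂ) - μ₂)‖ :=
        mul_le_mul hA1 hA2 (by positivity) (norm_nonneg _)
      have hp : (0:ℝ) < v^(-α-1) := Real.rpow_pos_of_pos hv0 _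
      nlinarith
  have hint : IntegrableOn (fun v : ℝ => (((v ^ (α - 1) : ℝ)):ℂ) /
      (((v ^ (2*α) : ℝ):ℂ) - 2*lam*((v^α:ℝ):ℂ)*((Real.cos (α*π):ℝ):ℂ) + lam^2)) (Ioi (0:ℝ)) := by
    rw [← Ioc_union_Ioi_eq_Ioi (zero_le_one : (0:ℝ) ≤ 1)]
    exact hintA.union hintB
  -- final assembly
  rw [MeasureTheory.integral_Ioi_of_hasDerivAt_of_tendsto hcont hderiv hint htop, hG0]
  have hα0' : (α:ℂ) ≠ 0 := by exact_mod_cast hα0.ne'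
  have hsinC : ((Real.sin θ : ℝ):ℂ) ≠ 0 := Complex.ofReal_ne_zero.mpr hsin0
  rw [show Real.sin (α * π) = Real.sin θ by rw [hθdef]; ring_nf, hKdef]
  field_simp
  push_cast [hθdef]
  ring_nf
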